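/- Let R be a commutative semiring, S a multiplicative subset of R, and let Rₛ be a localization of R at S with canonical map f : R → Rₛ. For an ideal I of R, let S(I) = f⁻¹(IRₛ) denote the contraction of the extension of I. If A is an S-primary ideal of R with √A = P, then S(A) is S(P)-primary, in the sense that for all a, b ∈ R, ab ∈ S(A) implies a ∈ S(A) or b ∈ S(P). -/
import Mathlib

lemma aux_contraction_mem {R Rs : Type*} [CommSemiring R] [CommSemiring Rs] [Algebra R Rs]
    (M : Submonoid R) [IsLocalization M Rs] (I : Ideal R) (u : R) (hu : u ∈ M) (x : R)
    (h : u * x ∈ I) : x ∈ (I.map (algebraMap R Rs)).comap (algebraMap R Rs) := by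
  rw [Ideal.mem_comap]
  obtain ⟨v, hv⟩ := (IsLocalization.map_units Rs (⟨u, hu⟩ : M)).exists_left_inv
  have hx : algebraMap R Rs x = v * algebraMap R Rs (u * x) := by
    rw [map_mul, ← mul_assoc, hv, one_mul]
  rw [hx]
  exact Ideal.mul_mem_left _ _ (Ideal.mem_map_of_mem _ h)

/-- If `A` is an S-P-primary ideal of a commutative semiring `R`, then the
contraction `S(A)` of its extension to the localization is `S(P)`-primary:
`ab ∈ S(A)` implies `a ∈ S(A)` or `b ∈ S(P)`. -/
theorem contraction_S_primary {R Rs : Type*} [CommSemiring R] [CommSemiring Rs]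
    [Algebra R Rs]
    (S : Set R) (hS1 : (1 : R) ∈ S) (hSmul : ∀ s ∈ S, ∀ t ∈ S, s * t ∈ S)
    [IsLocalization (Submonoid.closure S) Rs]
    (A P : Ideal R) (hAS : Disjoint S (A : Set R))
    (hAprim : ∃ s ∈ S, ∀ a b : R, a * b ∈ A → s * a ∈ A ∨ s * b ∈ A.radical)
    (hP : A.radical = P) :
    ∀ a b : R,
      a * b ∈ (A.map (algebraMap R Rs)).comap (algebraMap R Rs) →
      a ∈ (A.map (algebraMap R Rs)).comap (algebraMap R Rs) ∨
      b ∈ (P.map (algebraMap R Rs)).comap (algebraMap R Rs) := by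
  obtain ⟨s, hsS, hs⟩ := hAprim
  have hsM : s ∈ Submonoid.closure S := Submonoid.subset_closure hsS
  intro a b hab
  rw [Ideal.mem_comap,
    IsLocalization.mem_map_algebraMap_iff (Submonoid.closure S) Rs] at hab
  obtain ⟨⟨⟨i, hi⟩, ⟨t, ht⟩⟩, heq⟩ := hab
  rw [← map_mul] at heq
  obtain ⟨⟨c, hc⟩, hceq⟩ := (IsLocalization.eq_iff_exists (Submonoid.closure S) Rs).mp heq
  have hmem : a * (b * t * c) ∈ A := by
    have h1 : c * i ∈ A := A.mul_mem_left c hi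
    rw [← hceq] at h1
    convert h1 using 1
    ring
  rcases hs a (b * t * c) hmem with h | h
  · exact Or.inl (aux_contraction_mem _ A s hsM a h)
  · right
    rw [hP] at h
    have h' : (s * (t * c)) * b ∈ P := by
      have := h
      convert this using 1
      ring
    exact aux_contraction_mem _ P _ ((Submonoid.closure S).mul_mem hsM
      ((Submonoid.closure S).mul_mem ht hc)) b h'
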